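/- Let S = ⟨A ∣ u → v⟩ be a one-rule SRS such that u ≠ v and A has at least two letters. Then M_2 is embeddable in the reduction graph G_S. -/

import Mathlib

/-- One-step reduction of the one-rule SRS `⟨A ∣ u → v⟩`: `w →_S w'`. -/
def Step {A : Type*} (u v w w' : List A) : Prop :=
  ∃ p q : List A, w = p ++ u ++ q ∧ w' = p ++ v ++ q

/-- One-step reduction of `⟨A ∣ u → v⟩` carried out at position `i`. -/
def StepAt {A : Type*} (u v : List A) (i : ℕ) (w w' : List A) : Prop :=
  ∃ p q : List A, p.length = i ∧ w = p ++ u ++ q ∧ w' = p ++ v ++ q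

/-- The diamond graph `M_k` is embeddable in the reduction graph `G_S` of
`S = ⟨A ∣ u → v⟩`: there are pairwise distinct words `x, y, z_1, …, z_k`
with `x →_S z_i` and `z_i →_S y` for every `i`. -/
def MkEmbeddable {A : Type*} (u v : List A) (k : ℕ) : Prop :=
  ∃ (x y : List A) (z : Fin k → List A),
    Function.Injective z ∧ (∀ i, x ≠ z i) ∧ (∀ i, y ≠ z i) ∧ x ≠ y ∧
    ∀ i, Step u v x (z i) ∧ Step u v (z i) y

/-- Projection from the decorated alphabet `A ⊕ A` (`inl a` = plain letter `a`,
`inr a` = decorated letter `a•`) back to `A`. -/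
def proj {A : Type*} : A ⊕ A → A := Sum.elim id id

/-- One-step reduction of the decorated SRS `S̄` carried out at position `i`:
some word `ū` projecting to `u` is replaced by the fully decorated `v•`. -/
def DecStepAt {A : Type*} (u v : List A) (i : ℕ) (w w' : List (A ⊕ A)) : Prop :=
  ∃ p q ubar : List (A ⊕ A),
    p.length = i ∧ ubar.map proj = u ∧
    w = p ++ ubar ++ q ∧ w' = p ++ v.map Sum.inr ++ q

/-- The leftmost decorated letter of `w` is at position `i`. -/
def FirstDecorated {A : Type*} (w : List (A ⊕ A)) (i : ℕ) : Prop :=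
  (∃ a : A, w[i]? = some (Sum.inr a)) ∧
  ∀ j < i, ∀ a : A, w[j]? ≠ some (Sum.inr a)

/-- The one-rule SRS `⟨A ∣ u → v⟩` is left cancellative:
`u, v` are nonempty and their first letters are distinct. -/
def LeftCancellative {A : Type*} (u v : List A) : Prop :=
  u ≠ [] ∧ v ≠ [] ∧ u.head? ≠ v.head?

/-- `w` is bordered with `T`: `T` is both a prefix and a suffix of `w`. -/
def Bordered {A : Type*} (T w : List A) : Prop :=
  T <+: w ∧ T <:+ w

/-- `T` is self-overlap-free: `OVL(T) = ∅`, i.e. there is no nonempty `w`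
with `T = x ++ w = w ++ y` for nonempty `x, y`. -/
def SelfOverlapFree {A : Type*} (T : List A) : Prop :=
  ∀ w x y : List A, w ≠ [] → x ≠ [] → y ≠ [] → T = x ++ w → T = w ++ y → False

/-- `glue T [R₁, …, R_k] = T R₁ T R₂ ⋯ T R_k T`, the word of `Bord_T` whose
canonical decomposition is `R₁, …, R_k`; thus `φ_T (glue T Rs) = Rs`
(a word of length `Rs.length` over the alphabet `B` of `T`-free words). -/
def glue {A : Type*} (T : List A) : List (List A) → List A
  | [] => T
  | R :: Rs => T ++ R ++ glue T Rs

lemma mid_getElem {A : Type*} (u w : List A) (c : A) :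
    (u ++ [c] ++ w)[u.length]'(by simp) = c := by
  rw [List.getElem_append_left (by simp)]
  exact List.getElem_concat_length (l := u) (a := c) (i := u.length) rfl (by simp)

lemma left_getElem {A : Type*} (u w : List A) (c : A) (h : u.length < w.length) :
    (w ++ [c] ++ u)[u.length]'(by simp; omega) = w[u.length]'h := by
  rw [List.getElem_append_left (by simp; omega), List.getElem_append_left h]

lemma aux_idx {A : Type*} {u v : List A} (h : u.length < v.length) {c : A}
    (hc : v ++ [c] ++ u = u ++ [c] ++ v) : v[u.length]'h = c := by
  have h1 : (v ++ [c] ++ u)[u.length]'(by simp; omega)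
      = (u ++ [c] ++ v)[u.length]'(by simp) := List.getElem_of_eq hc _
  rw [left_getElem u v c h, mid_getElem] at h1
  exact h1

lemma key_sep {A : Type*} (u v : List A) (huv : u ≠ v) (a b : A) (hab : a ≠ b) :
    ∃ c : A, v ++ [c] ++ u ≠ u ++ [c] ++ v := by
  by_contra h
  push_neg at h
  have ha := h a
  have hb := h b
  rcases lt_trichotomy u.length v.length with hlt | heq | hgt
  · have h1 := aux_idx hlt ha
    have h2 := aux_idx hlt hb
    exact hab (h1 ▸ h2 ▸ rfl)
  · have := List.append_inj (by simpa [List.append_assoc] using ha)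
      (by simpa using heq.symm)
    exact huv this.1.symm
  · have h1 := aux_idx hgt ha.symm
    have h2 := aux_idx hgt hb.symm
    exact hab (h1 ▸ h2 ▸ rfl)

/-- if `u ≠ v` and the alphabet has at least two letters,
then `M_2` is embeddable in `G_S`. -/
theorem M2_embeddable {A : Type*} (u v : List A) (huv : u ≠ v)
    (a b : A) (hab : a ≠ b) :
    MkEmbeddable u v 2 := by
  obtain ⟨c, hc⟩ := key_sep u v huv a b hab
  refine ⟨u ++ [c] ++ u, v ++ [c] ++ v, ![v ++ [c] ++ u, u ++ [c] ++ v],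
    ?_, ?_, ?_, ?_, ?_⟩
  · intro i j hij
    fin_cases i <;> fin_cases j
    · rfl
    · exact absurd hij hc
    · exact absurd hij.symm hc
    · rfl
  · intro i
    fin_cases i <;> intro h <;> simp_all
  · intro i
    fin_cases i <;> intro h <;> simp_all
  · intro h
    have hlen : u.length = v.length := by
      have := congrArg List.length h; simp at this; omega
    have := List.append_inj (by simpa [List.append_assoc] using h) hlen
    exact huv this.1
  · intro i
    fin_cases i
    · exact ⟨⟨[], [c] ++ u, by simp, by simp⟩, ⟨v ++ [c], [], by simp, by simp⟩⟩
    · exact ⟨⟨u ++ [c], [], by simp, by simp⟩, ⟨[], [c] ++ v, by simp, by simp⟩⟩
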